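/- Let (C,ℓ_C) and (D,ℓ_D) be finite-dimensional filtered vector spaces over a Novikov field Λ, with orthogonal bases {x_1,…,x_m} and {y_1,…,y_n}, and define ℓ^⊗ on C ⊗_Λ D by ℓ^⊗(Σ λ_{ij} x_i ⊗ y_j) = max_{i,j}(ℓ_C(x_i) + ℓ_D(y_j) − ν(λ_{ij})). Then ℓ^⊗ is independent of the choice of orthogonal bases: for any other orthogonal bases {w_i} of C and {z_j} of D, ℓ^⊗(Σ μ_{ij} w_i ⊗ z_j) = max_{i,j}(ℓ_C(w_i) + ℓ_D(z_j) − ν(μ_{ij})). -/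

import Mathlib

noncomputable section
open TensorProduct
open Classical in
/-- The valuation `ν(Σ a_g T^g) = min {g : a_g ≠ 0}` (with `ν 0 = ∞`) on the Novikov
field `Λ^{K,Γ}` (realized inside the Hahn series field). -/
def novikovVal {K : Type*} [Field K] {Γ : AddSubgroup ℝ} (a : HahnSeries Γ K) : EReal :=
  if a = 0 then ⊤ else ((a.order : ℝ) : EReal)

/-- `b` is an orthogonal basis for the filtered `Λ`-vector space `(C,ℓ)`, with real
filtration levels `c i = ℓ(b i)`: `ℓ(Σ λ_i x_i) = max_i (ℓ(x_i) − ν(λ_i))`. -/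
def IsOrthogonalBasis {K : Type*} [Field K] {Γ : AddSubgroup ℝ} {C : Type*}
    [AddCommGroup C] [Module (HahnSeries Γ K) C] (ℓ : C → EReal) {m : ℕ}
    (b : Module.Basis (Fin m) (HahnSeries Γ K) C) (c : Fin m → ℝ) : Prop :=
  (∀ i, ℓ (b i) = (c i : EReal)) ∧
  ∀ v : C, ℓ v = ⨆ i, ((c i : EReal) - novikovVal (b.repr v i))

/-- The tensor-product filtration determined by a pair of orthogonal bases:
`ℓ^⊗(Σ λ_{ij} x_i ⊗ y_j) = max_{i,j} (ℓ_C(x_i) + ℓ_D(y_j) − ν(λ_{ij}))`. -/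
def tensorFiltLevel {K : Type*} [Field K] {Γ : AddSubgroup ℝ} {C D : Type*}
    [AddCommGroup C] [Module (HahnSeries Γ K) C]
    [AddCommGroup D] [Module (HahnSeries Γ K) D] {m n : ℕ}
    (b : Module.Basis (Fin m) (HahnSeries Γ K) C) (c : Fin m → ℝ)
    (b' : Module.Basis (Fin n) (HahnSeries Γ K) D) (c' : Fin n → ℝ)
    (z : C ⊗[HahnSeries Γ K] D) : EReal :=
  ⨆ p : Fin m × Fin n,
    (((c p.1 + c' p.2 : ℝ) : EReal) - novikovVal ((b.tensorProduct b').repr z p))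

set_option maxHeartbeats 1000000
section Helpers
variable {K : Type*} [Field K] {Γ : AddSubgroup ℝ}

lemma novikovVal_ne_bot (a : HahnSeries Γ K) : novikovVal a ≠ ⊥ := by
  unfold novikovVal; split <;> simp

lemma novikovVal_zero : novikovVal (0 : HahnSeries Γ K) = ⊤ := by
  simp [novikovVal]

lemma novikovVal_mul (a b : HahnSeries Γ K) :
    novikovVal (a * b) = novikovVal a + novikovVal b := by
  by_cases ha : a = 0
  · rw [ha, zero_mul, novikovVal_zero, EReal.top_add_of_ne_bot (novikovVal_ne_bot b)]
  by_cases hb : b = 0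
  · rw [hb, mul_zero, novikovVal_zero, EReal.add_top_of_ne_bot (novikovVal_ne_bot a)]
  have hab : a * b ≠ 0 := mul_ne_zero ha hb
  unfold novikovVal
  rw [if_neg hab, if_neg ha, if_neg hb, HahnSeries.order_mul ha hb]
  push_cast
  ring

lemma min_novikovVal_le_add (a b : HahnSeries Γ K) :
    min (novikovVal a) (novikovVal b) ≤ novikovVal (a + b) := by
  by_cases ha : a = 0
  · rw [ha, zero_add]; exact min_le_right _ _
  by_cases hb : b = 0
  · rw [hb, add_zero]; exact min_le_left _ _
  by_cases hab : a + b = 0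
  · rw [hab, novikovVal_zero]; exact le_top
  unfold novikovVal
  rw [if_neg ha, if_neg hb, if_neg hab]
  have := HahnSeries.min_order_le_order_add hab
  rcases le_total a.order b.order with h | h
  · rw [min_eq_left h] at this
    rw [min_eq_left]
    · exact_mod_cast this
    · exact_mod_cast h
  · rw [min_eq_right h] at this
    rw [min_eq_right]
    · exact_mod_cast this
    · exact_mod_cast h

lemma le_novikovVal_sum {ι : Type*} (s : Finset ι) (f : ι → HahnSeries Γ K) (t : EReal)
    (h : ∀ p ∈ s, t ≤ novikovVal (f p)) : t ≤ novikovVal (∑ p ∈ s, f p) := by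
  classical
  induction s using Finset.induction_on with
  | empty => simp [novikovVal]
  | insert a s hx ih =>
    rw [Finset.sum_insert hx]
    refine le_trans ?_ (min_novikovVal_le_add _ _)
    exact le_min (h a (Finset.mem_insert_self a s))
      (ih fun p hp => h p (Finset.mem_insert_of_mem hp))

lemma ereal_E1 (u v : ℝ) (x : EReal) (hx : x ≠ ⊥) :
    ((u : ℝ) : EReal) - (((u - v : ℝ) : EReal) + x) = ((v : ℝ) : EReal) - x := by
  induction x with
  | bot => exact absurd rfl hx
  | coe r => norm_cast; ring
  | top =>
    rw [EReal.add_top_of_ne_bot (by exact_mod_cast EReal.coe_ne_bot _)]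
    simp

lemma ereal_E3 {a b : ℝ} {x : EReal} (h : (a : EReal) - x ≤ (b : EReal)) :
    ((a - b : ℝ) : EReal) ≤ x := by
  induction x with
  | bot =>
    rw [EReal.sub_bot (EReal.coe_ne_bot a)] at h
    exact absurd h (by simp)
  | coe r =>
    rw [show ((a : EReal) - (r : EReal)) = ((a - r : ℝ) : EReal) by norm_cast] at h
    have : a - r ≤ b := by exact_mod_cast h
    exact_mod_cast (by linarith : a - b ≤ r)
  | top => exact le_top

lemma ereal_E4 (a : ℝ) {x S : EReal} (h : (a : EReal) - x ≤ S) :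
    (a : EReal) - S ≤ x := by
  induction x with
  | bot =>
    rw [EReal.sub_bot (EReal.coe_ne_bot a)] at h
    rw [top_le_iff.mp h]
    simp
  | coe r =>
    induction S with
    | bot =>
      rw [show ((a : EReal) - (r : EReal)) = ((a - r : ℝ) : EReal) by norm_cast] at h
      exact absurd (le_bot_iff.mp h) (EReal.coe_ne_bot _)
    | coe s =>
      rw [show ((a : EReal) - (r : EReal)) = ((a - r : ℝ) : EReal) by norm_cast] at h
      rw [show ((a : EReal) - (s : EReal)) = ((a - s : ℝ) : EReal) by norm_cast]
      have : a - r ≤ s := by exact_mod_cast h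
      exact_mod_cast (by linarith : a - s ≤ r)
    | top => simp
  | top => exact le_top

lemma ereal_add_ne_bot {x y : EReal} (hx : x ≠ ⊥) (hy : y ≠ ⊥) : x + y ≠ ⊥ := by
  induction x with
  | bot => exact absurd rfl hx
  | coe r =>
    induction y with
    | bot => exact absurd rfl hy
    | coe s => exact_mod_cast EReal.coe_ne_bot (r + s)
    | top => rw [EReal.add_top_of_ne_bot hx]; simp
  | top => rw [EReal.top_add_of_ne_bot hy]; simp

lemma ereal_E5 (a v : ℝ) {x S : EReal} (hx : x ≠ ⊥)
    (h : ((v : ℝ) : EReal) - x ≤ S) :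
    (a : EReal) - S ≤ ((a - v : ℝ) : EReal) + x := by
  apply ereal_E4 a
  rw [ereal_E1 a v x hx]
  exact h

-- main one-sided inequality
lemma tensorFiltLevel_le {C D : Type*} [AddCommGroup C] [Module (HahnSeries Γ K) C]
    [AddCommGroup D] [Module (HahnSeries Γ K) D]
    (ℓC : C → EReal) (ℓD : D → EReal) {m m' n n' : ℕ}
    (b : Module.Basis (Fin m) (HahnSeries Γ K) C) (c : Fin m → ℝ)
    (w : Module.Basis (Fin m') (HahnSeries Γ K) C) (cw : Fin m' → ℝ)
    (b' : Module.Basis (Fin n) (HahnSeries Γ K) D) (c' : Fin n → ℝ)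
    (w' : Module.Basis (Fin n') (HahnSeries Γ K) D) (cw' : Fin n' → ℝ)
    (hb : IsOrthogonalBasis ℓC b c) (hw : IsOrthogonalBasis ℓC w cw)
    (hb' : IsOrthogonalBasis ℓD b' c') (hw' : IsOrthogonalBasis ℓD w' cw')
    (z : C ⊗[HahnSeries Γ K] D) :
    tensorFiltLevel w cw w' cw' z ≤ tensorFiltLevel b c b' c' z := by
  set S := tensorFiltLevel b c b' c' z with hS
  -- change of basis coefficient formula
  have hμ : ∀ q : Fin m' × Fin n',
      ((w.tensorProduct w').repr z) q
        = ∑ p : Fin m × Fin n,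
            ((b.tensorProduct b').repr z) p *
              ((w.repr (b p.1) q.1) * (w'.repr (b' p.2) q.2)) := by
    rintro ⟨j, j'⟩
    conv_lhs => rw [← (b.tensorProduct b').sum_repr z]
    rw [map_sum, Finsupp.coe_finset_sum, Finset.sum_apply]
    refine Finset.sum_congr rfl fun p _ => ?_
    rw [map_smul, Finsupp.smul_apply, smul_eq_mul, Module.Basis.tensorProduct_apply',
      Module.Basis.tensorProduct_repr_tmul_apply, smul_eq_mul]
    ring
  -- valuation bounds on change-of-basis matrices
  have hA : ∀ (i : Fin m) (j : Fin m'),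
      ((cw j - c i : ℝ) : EReal) ≤ novikovVal (w.repr (b i) j) := by
    intro i j
    apply ereal_E3 (x := novikovVal (w.repr (b i) j))
    rw [← hb.1 i, hw.2 (b i)]
    exact le_iSup (fun j => ((cw j : ℝ) : EReal) - novikovVal (w.repr (b i) j)) j
  have hA' : ∀ (i : Fin n) (j : Fin n'),
      ((cw' j - c' i : ℝ) : EReal) ≤ novikovVal (w'.repr (b' i) j) := by
    intro i j
    apply ereal_E3 (x := novikovVal (w'.repr (b' i) j))
    rw [← hb'.1 i, hw'.2 (b' i)]
    exact le_iSup (fun j => ((cw' j : ℝ) : EReal) - novikovVal (w'.repr (b' i) j)) j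
  rw [tensorFiltLevel]
  apply iSup_le
  rintro ⟨j, j'⟩
  apply ereal_E4
  rw [hμ ⟨j, j'⟩]
  apply le_novikovVal_sum
  rintro ⟨i, i'⟩ -
  rw [novikovVal_mul, novikovVal_mul]
  set lam := ((b.tensorProduct b').repr z) (i, i') with hlam
  have hstep1 : ((cw j + cw' j' : ℝ) : EReal) - S
      ≤ (((cw j + cw' j') - (c i + c' i') : ℝ) : EReal) + novikovVal lam := by
    apply ereal_E5 _ _ (novikovVal_ne_bot lam)
    exact le_iSup (fun p : Fin m × Fin n =>
      ((c p.1 + c' p.2 : ℝ) : EReal) - novikovVal ((b.tensorProduct b').repr z p)) (i, i')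
  refine hstep1.trans ?_
  have hmat : (((cw j + cw' j') - (c i + c' i') : ℝ) : EReal)
      ≤ novikovVal (w.repr (b i) j) + novikovVal (w'.repr (b' i') j') := by
    have : (((cw j + cw' j') - (c i + c' i') : ℝ) : EReal)
        = ((cw j - c i : ℝ) : EReal) + ((cw' j' - c' i' : ℝ) : EReal) := by
      norm_cast; ring
    rw [this]
    exact add_le_add (hA i j) (hA' i' j')
  calc (((cw j + cw' j') - (c i + c' i') : ℝ) : EReal) + novikovVal lam
      ≤ (novikovVal (w.repr (b i) j) + novikovVal (w'.repr (b' i') j')) + novikovVal lam :=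
        add_le_add hmat le_rfl
    _ = novikovVal lam + (novikovVal (w.repr (b i) j) + novikovVal (w'.repr (b' i') j')) := by
        rw [add_comm]

end Helpers

/-- The filtration `ℓ^⊗` on `C ⊗_Λ D` induced by orthogonal bases of the
finite-dimensional filtered `Λ`-vector spaces `(C,ℓ_C)` and `(D,ℓ_D)` is independent of
the choice of orthogonal bases. -/
theorem tensorFiltLevel_basis_independent {K : Type*} [Field K] {Γ : AddSubgroup ℝ}
    {C D : Type*} [AddCommGroup C] [Module (HahnSeries Γ K) C]
    [AddCommGroup D] [Module (HahnSeries Γ K) D]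
    (ℓC : C → EReal) (ℓD : D → EReal) {m m' n n' : ℕ}
    (b : Module.Basis (Fin m) (HahnSeries Γ K) C) (c : Fin m → ℝ)
    (w : Module.Basis (Fin m') (HahnSeries Γ K) C) (cw : Fin m' → ℝ)
    (b' : Module.Basis (Fin n) (HahnSeries Γ K) D) (c' : Fin n → ℝ)
    (w' : Module.Basis (Fin n') (HahnSeries Γ K) D) (cw' : Fin n' → ℝ)
    (hb : IsOrthogonalBasis ℓC b c) (hw : IsOrthogonalBasis ℓC w cw)
    (hb' : IsOrthogonalBasis ℓD b' c') (hw' : IsOrthogonalBasis ℓD w' cw') :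
    ∀ z : C ⊗[HahnSeries Γ K] D,
      tensorFiltLevel b c b' c' z = tensorFiltLevel w cw w' cw' z := by
  intro z
  exact le_antisymm
    (tensorFiltLevel_le ℓC ℓD w cw b c w' cw' b' c' hw hb hw' hb' z)
    (tensorFiltLevel_le ℓC ℓD b c w cw b' c' w' cw' hb hw hb' hw' z)

end
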